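/- Let B be the cube-construction NFA for √L built from an n-state NFA A recognizing L. Then L(B) = √L, i.e., B accepts a word w if and only if ww ∈ L(A). -/

import Mathlib

/-- The cube-construction NFA for `√L` built from an NFA `A`. -/
def cubeNFA {α σ : Type} (M : NFA α σ) : NFA α (σ × σ × σ) where
  step := fun x a => {y | y.1 = x.1 ∧ y.2.1 ∈ M.step x.2.1 a ∧ y.2.2 ∈ M.step x.2.2 a}
  start := {x | x.2.1 ∈ M.start ∧ x.2.2 = x.1}
  accept := {x | x.2.1 = x.1 ∧ x.2.2 ∈ M.accept}

lemma evalFrom_cons {α σ : Type} (M : NFA α σ) (S : Set σ) (a : α) (w : List α) :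
    M.evalFrom S (a :: w) = M.evalFrom (M.stepSet S a) w := rfl

lemma evalFrom_append' {α σ : Type} (M : NFA α σ) (S : Set σ) (u v : List α) :
    M.evalFrom S (u ++ v) = M.evalFrom (M.evalFrom S u) v := by
  simp [NFA.evalFrom, List.foldl_append]

lemma mem_evalFrom_iff {α σ : Type} (M : NFA α σ) (w : List α) :
    ∀ (S : Set σ) (x : σ), x ∈ M.evalFrom S w ↔ ∃ p ∈ S, x ∈ M.evalFrom {p} w := by
  induction w with
  | nil => intro S x; simp [NFA.evalFrom]
  | cons a w ih =>
    intro S x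
    rw [evalFrom_cons, ih]
    constructor
    · rintro ⟨q, hq, hx⟩
      rw [NFA.mem_stepSet] at hq
      obtain ⟨p, hp, hq⟩ := hq
      refine ⟨p, hp, ?_⟩
      rw [evalFrom_cons, ih]
      exact ⟨q, NFA.mem_stepSet.2 ⟨p, rfl, hq⟩, hx⟩
    · rintro ⟨p, hp, hx⟩
      rw [evalFrom_cons, ih] at hx
      obtain ⟨q, hq, hx⟩ := hx
      rw [NFA.mem_stepSet] at hq
      obtain ⟨p', hp', hq⟩ := hq
      cases hp'
      exact ⟨q, NFA.mem_stepSet.2 ⟨p, hp, hq⟩, hx⟩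

lemma cube_evalFrom {α σ : Type} (M : NFA α σ) (w : List α) :
    ∀ (S : Set (σ × σ × σ)) (x : σ × σ × σ),
      x ∈ (cubeNFA M).evalFrom S w ↔
        ∃ y ∈ S, y.1 = x.1 ∧ x.2.1 ∈ M.evalFrom {y.2.1} w ∧ x.2.2 ∈ M.evalFrom {y.2.2} w := by
  induction w with
  | nil =>
    intro S x
    simp only [NFA.evalFrom_nil, Set.mem_singleton_iff]
    constructor
    · intro h; exact ⟨x, h, rfl, rfl, rfl⟩
    · rintro ⟨⟨y1, y2, y3⟩, hy, h1, h2, h3⟩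
      obtain ⟨x1, x2, x3⟩ := x
      simp_all
  | cons a w ih =>
    intro S x
    rw [evalFrom_cons, ih]
    constructor
    · rintro ⟨y, hy, h1, h2, h3⟩
      rw [NFA.mem_stepSet] at hy
      obtain ⟨z, hz, hy⟩ := hy
      obtain ⟨e1, e2, e3⟩ := hy
      refine ⟨z, hz, e1.symm.trans h1, ?_, ?_⟩
      · rw [evalFrom_cons, mem_evalFrom_iff]
        exact ⟨y.2.1, NFA.mem_stepSet.2 ⟨z.2.1, rfl, e2⟩, h2⟩
      · rw [evalFrom_cons, mem_evalFrom_iff]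
        exact ⟨y.2.2, NFA.mem_stepSet.2 ⟨z.2.2, rfl, e3⟩, h3⟩
    · rintro ⟨z, hz, h1, h2, h3⟩
      rw [evalFrom_cons, mem_evalFrom_iff] at h2 h3
      obtain ⟨q, hq, h2⟩ := h2
      obtain ⟨r, hr, h3⟩ := h3
      rw [NFA.mem_stepSet] at hq hr
      obtain ⟨q', hq', hq⟩ := hq
      obtain ⟨r', hr', hr⟩ := hr
      cases hq'; cases hr'
      refine ⟨(z.1, q, r), ?_, h1, h2, h3⟩
      rw [NFA.mem_stepSet]
      exact ⟨z, hz, rfl, hq, hr⟩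

/-- The cube construction recognizes exactly `√L`:
`B` accepts `w` iff `ww ∈ L(A)`. -/
theorem cubeNFA_accepts {α σ : Type} (M : NFA α σ) :
    (cubeNFA M).accepts = {w : List α | w ++ w ∈ M.accepts} := by
  ext w
  change _ ↔ w ++ w ∈ M.accepts
  rw [NFA.mem_accepts, NFA.mem_accepts]
  constructor
  · rintro ⟨x, hacc, hx⟩
    rw [cube_evalFrom] at hx
    obtain ⟨y, hy, h1, h2, h3⟩ := hx
    obtain ⟨hy1, hy2⟩ := hy
    obtain ⟨hacc1, hacc2⟩ := hacc
    refine ⟨x.2.2, hacc2, ?_⟩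
    rw [evalFrom_append', mem_evalFrom_iff]
    refine ⟨x.2.1, ?_, ?_⟩
    · rw [mem_evalFrom_iff]
      exact ⟨y.2.1, hy1, h2⟩
    · rwa [hy2, h1, ← hacc1] at h3
  · rintro ⟨f, hf, hev⟩
    rw [evalFrom_append', mem_evalFrom_iff] at hev
    obtain ⟨p, hp, hf2⟩ := hev
    rw [mem_evalFrom_iff] at hp
    obtain ⟨q0, hq0, hp⟩ := hp
    refine ⟨(p, p, f), ⟨rfl, hf⟩, ?_⟩
    rw [cube_evalFrom]
    exact ⟨(p, q0, p), ⟨hq0, rfl⟩, rfl, hp, hf2⟩
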